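/- For every initial condition a0 ∈ ℝ^L with all components ≥ 0, the auxin transport system admits a unique solution defined on all of [0,∞): there exists a unique differentiable a : [0,∞) → ℝ^L with a(0) = a0 and a'(t) = f(a(t)) for all t ≥ 0, and this solution satisfies a_i(t) ≥ 0 for every i and every t ≥ 0. -/

import Mathlib

open Finset Filter Set Metric
open scoped NNReal Topology

/-- `auxN G κ a i = κ + ∑_{j ~ i} a_j`. -/
noncomputable def auxN {L : ℕ} (G : SimpleGraph (Fin L)) [DecidableRel G.Adj] (κ : ℝ)
    (a : Fin L → ℝ) (i : Fin L) : ℝ :=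
  κ + ∑ j ∈ G.neighborFinset i, a j

/-- The auxin transport vector field
`f_i(a) = D·∑_{k ~ i}(a_k − a_i) + T·∑_{k ~ i}(a_k·a_i/N_k(a) − a_i·a_k/N_i(a))`. -/
noncomputable def auxF {L : ℕ} (G : SimpleGraph (Fin L)) [DecidableRel G.Adj] (κ D T : ℝ)
    (a : Fin L → ℝ) (i : Fin L) : ℝ :=
  D * ∑ k ∈ G.neighborFinset i, (a k - a i) +
    T * ∑ k ∈ G.neighborFinset i,
      (a k * a i / auxN G κ a k - a i * a k / auxN G κ a i)

lemma aux_swap {L : ℕ} (G : SimpleGraph (Fin L)) [DecidableRel G.Adj] (h : Fin L → Fin L → ℝ) :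
    ∑ i, ∑ k ∈ G.neighborFinset i, h i k = ∑ i, ∑ k ∈ G.neighborFinset i, h k i := by
  rw [Finset.sum_sigma', Finset.sum_sigma']
  apply Finset.sum_nbij' (fun p => ⟨p.2, p.1⟩) (fun p => ⟨p.2, p.1⟩) <;>
    simp [SimpleGraph.mem_neighborFinset]
  · intro p hadj; exact hadj.symm
  · intro p hadj; exact hadj.symm

lemma sum_auxF_eq_zero {L : ℕ} (G : SimpleGraph (Fin L)) [DecidableRel G.Adj] (κ D T : ℝ)
    (c : Fin L → ℝ) : ∑ i, auxF G κ D T c i = 0 := by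
  have hA : ∑ i, ∑ k ∈ G.neighborFinset i, (c k - c i) = 0 := by
    have := aux_swap G (fun i k => c k - c i)
    have h2 : ∑ i, ∑ k ∈ G.neighborFinset i, (c i - c k)
        = -∑ i, ∑ k ∈ G.neighborFinset i, (c k - c i) := by
      rw [← Finset.sum_neg_distrib]
      congr 1; ext i; rw [← Finset.sum_neg_distrib]; congr 1; ext k; ring
    linarith [this, h2]
  have hB : ∑ i, ∑ k ∈ G.neighborFinset i,
      (c k * c i / auxN G κ c k - c i * c k / auxN G κ c i) = 0 := by
    have := aux_swap G (fun i k => c k * c i / auxN G κ c k - c i * c k / auxN G κ c i)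
    have h2 : ∑ i, ∑ k ∈ G.neighborFinset i, (c i * c k / auxN G κ c i - c k * c i / auxN G κ c k)
        = -∑ i, ∑ k ∈ G.neighborFinset i, (c k * c i / auxN G κ c k - c i * c k / auxN G κ c i) := by
      rw [← Finset.sum_neg_distrib]
      congr 1; ext i; rw [← Finset.sum_neg_distrib]; congr 1; ext k; ring
    linarith [this, h2]
  simp only [auxF, Finset.sum_add_distrib, ← Finset.mul_sum, hA, hB, mul_zero, add_zero]
/-- componentwise clamp to [0,S] -/
def auxClamp {L : ℕ} (S : ℝ) (a : Fin L → ℝ) : Fin L → ℝ := fun i => max 0 (min (a i) S)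

lemma auxClamp_lipschitz {L : ℕ} (S : ℝ) : LipschitzWith 1 (auxClamp (L := L) S) := by
  apply LipschitzWith.of_dist_le_mul
  intro x y
  rw [NNReal.coe_one, one_mul]
  rcases isEmpty_or_nonempty (Fin L) with h | h
  · rw [Subsingleton.elim (auxClamp S x) (auxClamp S y), dist_self]; exact dist_nonneg
  rw [dist_pi_le_iff dist_nonneg]
  intro i
  rw [Real.dist_eq]
  calc |auxClamp S x i - auxClamp S y i| ≤ |min (x i) S - min (y i) S| := by
        unfold auxClamp
        rw [max_comm (0:ℝ) (min (x i) S), max_comm (0:ℝ) (min (y i) S)]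
        exact abs_max_sub_max_le_abs _ _ 0
    _ ≤ max |x i - y i| |S - S| := abs_min_sub_min_le_max _ _ _ _
    _ ≤ |x i - y i| := by simp
    _ ≤ dist x y := by rw [← Real.dist_eq]; exact dist_le_pi_dist x y i

lemma auxClamp_mem {L : ℕ} {S : ℝ} (hS : 0 ≤ S) (a : Fin L → ℝ) (i : Fin L) :
    auxClamp S a i ∈ Set.Icc (0:ℝ) S := by
  constructor
  · exact le_max_left _ _
  · exact max_le hS (min_le_right _ _)

lemma auxClamp_eq_self {L : ℕ} {S : ℝ} {a : Fin L → ℝ} (h : ∀ i, a i ∈ Set.Icc (0:ℝ) S) :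
    auxClamp S a = a := by
  funext i
  have := h i
  simp only [auxClamp]
  rw [min_eq_left this.2, max_eq_right this.1]

lemma auxClamp_eq_zero {L : ℕ} {S : ℝ} {a : Fin L → ℝ} {i : Fin L} (h : a i ≤ 0) :
    auxClamp S a i = 0 :=
  max_eq_left ((min_le_left _ _).trans h)

/-- the open set where all denominators are positive -/
def auxU {L : ℕ} (G : SimpleGraph (Fin L)) [DecidableRel G.Adj] (κ : ℝ) : Set (Fin L → ℝ) :=
  {x | ∀ k, 0 < auxN G κ x k}

lemma continuous_auxN {L : ℕ} (G : SimpleGraph (Fin L)) [DecidableRel G.Adj] (κ : ℝ) (k : Fin L) :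
    Continuous fun x : Fin L → ℝ => auxN G κ x k := by
  unfold auxN
  fun_prop

lemma isOpen_auxU {L : ℕ} (G : SimpleGraph (Fin L)) [DecidableRel G.Adj] (κ : ℝ) :
    IsOpen (auxU G κ) := by
  have : auxU G κ = ⋂ k, (fun x : Fin L → ℝ => auxN G κ x k) ⁻¹' Set.Ioi 0 := by
    ext x; simp [auxU]
  rw [this]
  exact isOpen_iInter_of_finite fun k => (continuous_auxN G κ k).isOpen_preimage _ isOpen_Ioi

lemma contDiffOn_auxF {L : ℕ} (G : SimpleGraph (Fin L)) [DecidableRel G.Adj] (κ D T : ℝ) :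
    ContDiffOn ℝ 1 (auxF G κ D T) (auxU G κ) := by
  rw [contDiffOn_pi]
  intro i
  unfold auxF
  have hN : ∀ k : Fin L, ContDiffOn ℝ 1 (fun x : Fin L → ℝ => auxN G κ x k) (auxU G κ) := by
    intro k
    unfold auxN
    apply ContDiffOn.add contDiffOn_const
    exact (ContDiff.sum fun j _ => contDiff_apply ℝ ℝ j).contDiffOn
  have hproj : ∀ k : Fin L, ContDiffOn ℝ 1 (fun x : Fin L → ℝ => x k) (auxU G κ) := fun k =>
    (contDiff_apply ℝ ℝ k).contDiffOn
  apply ContDiffOn.add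
  · exact contDiffOn_const.mul (ContDiffOn.sum fun k _ => (hproj k).sub (hproj i))
  · refine contDiffOn_const.mul (ContDiffOn.sum fun k _ => ContDiffOn.sub ?_ ?_)
    · exact ((hproj k).mul (hproj i)).div (hN k) (fun x hx => (hx k).ne')
    · exact ((hproj i).mul (hproj k)).div (hN i) (fun x hx => (hx i).ne')

def auxBox {L : ℕ} (S : ℝ) : Set (Fin L → ℝ) := Set.pi Set.univ (fun _ => Set.Icc 0 S)

lemma mem_auxBox {L : ℕ} {S : ℝ} {x : Fin L → ℝ} :
    x ∈ auxBox S ↔ ∀ i, x i ∈ Set.Icc (0:ℝ) S := by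
  rw [auxBox, Set.mem_univ_pi]

lemma auxBox_subset_auxU {L : ℕ} (G : SimpleGraph (Fin L)) [DecidableRel G.Adj] {κ : ℝ}
    (hκ : 0 < κ) (S : ℝ) : auxBox S ⊆ auxU G κ := by
  intro x hx k
  have : (0:ℝ) ≤ ∑ j ∈ G.neighborFinset k, x j :=
    Finset.sum_nonneg fun j _ => (mem_auxBox.mp hx j).1
  unfold auxN
  linarith

lemma auxBox_compact {L : ℕ} (S : ℝ) : IsCompact (auxBox (L := L) S) :=
  isCompact_univ_pi fun _ => isCompact_Icc

lemma auxBox_convex {L : ℕ} (S : ℝ) : Convex ℝ (auxBox (L := L) S) :=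
  convex_pi fun _ _ => convex_Icc 0 S

lemma auxBox_nonempty {L : ℕ} {S : ℝ} (hS : 0 ≤ S) : (auxBox (L := L) S).Nonempty :=
  ⟨fun _ => 0, mem_auxBox.mpr fun _ => ⟨le_rfl, hS⟩⟩

lemma auxF_lipschitzOnWith {L : ℕ} (G : SimpleGraph (Fin L)) [DecidableRel G.Adj] {κ : ℝ}
    (D T : ℝ) (hκ : 0 < κ) {S : ℝ} (hS : 0 ≤ S) :
    ∃ K : ℝ≥0, LipschitzOnWith K (auxF G κ D T) (auxBox S) := by
  have hU := isOpen_auxU G κ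
  have hcd := contDiffOn_auxF G κ D T
  have hsub := auxBox_subset_auxU G hκ S
  have hdiff : ∀ x ∈ auxU G κ, HasFDerivAt (auxF G κ D T) (fderiv ℝ (auxF G κ D T) x) x :=
    fun x hx => ((hcd.differentiableOn one_ne_zero x hx).differentiableAt (hU.mem_nhds hx)).hasFDerivAt
  have hcont : ContinuousOn (fderiv ℝ (auxF G κ D T)) (auxU G κ) :=
    hcd.continuousOn_fderiv_of_isOpen hU le_rfl
  obtain ⟨x0, _, hx0⟩ := (auxBox_compact S).exists_isMaxOn (auxBox_nonempty hS)
    ((hcont.mono hsub).norm)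
  refine ⟨‖fderiv ℝ (auxF G κ D T) x0‖₊, ?_⟩
  apply (auxBox_convex S).lipschitzOnWith_of_nnnorm_hasFDerivWithin_le
    (fun x hx => (hdiff x (hsub hx)).hasFDerivWithinAt)
  intro x hx
  exact_mod_cast hx0 hx

lemma auxF_bddOn {L : ℕ} (G : SimpleGraph (Fin L)) [DecidableRel G.Adj] {κ : ℝ}
    (D T : ℝ) (hκ : 0 < κ) {S : ℝ} (hS : 0 ≤ S) :
    ∃ C : ℝ, 0 ≤ C ∧ ∀ x ∈ auxBox (L := L) S, ‖auxF G κ D T x‖ ≤ C := by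
  have hcd := contDiffOn_auxF G κ D T
  have hsub := auxBox_subset_auxU G hκ S
  obtain ⟨x0, hx0mem, hx0⟩ := (auxBox_compact S).exists_isMaxOn (auxBox_nonempty hS)
    (((hcd.continuousOn).mono hsub).norm)
  exact ⟨‖auxF G κ D T x0‖, norm_nonneg _, fun x hx => hx0 hx⟩
lemma hasDerivAt_component {L : ℕ} {a : ℝ → Fin L → ℝ} {v : Fin L → ℝ} {t : ℝ}
    (h : HasDerivAt a v t) (i : Fin L) : HasDerivAt (fun s => a s i) (v i) t :=
  (ContinuousLinearMap.proj (R := ℝ) (φ := fun _ : Fin L => ℝ) i).hasFDerivAt.comp_hasDerivAt t h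

lemma nonneg_of_deriv_nonneg_of_neg {u g : ℝ → ℝ}
    (hd : ∀ t, 0 ≤ t → HasDerivAt u (g t) t) (h0 : 0 ≤ u 0)
    (hg : ∀ t, 0 ≤ t → u t < 0 → 0 ≤ g t) : ∀ t, 0 ≤ t → 0 ≤ u t := by
  intro t1 ht1
  by_contra hneg
  push_neg at hneg
  have ht1' : 0 < t1 := by
    rcases lt_or_eq_of_le ht1 with h | h
    · exact h
    · exfalso; rw [← h] at hneg; linarith
  have hcont : ContinuousOn u (Icc 0 t1) := fun s hs =>
    ((hd s hs.1).continuousAt).continuousWithinAt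
  set Z : Set ℝ := {s ∈ Icc (0:ℝ) t1 | 0 ≤ u s} with hZ
  have hZclosed : IsClosed Z := by
    have : Z = Icc (0:ℝ) t1 ∩ u ⁻¹' Ici 0 := by ext s; simp [hZ, Set.mem_sep_iff, and_comm]
    rw [this]
    exact hcont.preimage_isClosed_of_isClosed isClosed_Icc isClosed_Ici
  have hZne : Z.Nonempty := ⟨0, ⟨le_rfl, le_of_lt ht1'⟩, h0⟩
  have hZbdd : BddAbove Z := BddAbove.mono (fun s hs => hs.1) bddAbove_Icc
  set σ := sSup Z with hσ
  have hσZ : σ ∈ Z := hZclosed.csSup_mem hZne hZbdd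
  have hσ0 : 0 ≤ σ := hσZ.1.1
  have hσt1 : σ ≤ t1 := hσZ.1.2
  have hσu : 0 ≤ u σ := hσZ.2
  have hσlt : σ < t1 := by
    rcases lt_or_eq_of_le hσt1 with h | h
    · exact h
    · exfalso; rw [h] at hσu; linarith
  have hlt : ∀ s, σ < s → s ≤ t1 → u s < 0 := by
    intro s hs hst1
    by_contra hcon
    push_neg at hcon
    have : s ∈ Z := ⟨⟨by linarith, hst1⟩, hcon⟩
    exact absurd (le_csSup hZbdd this) (not_le.mpr hs)
  have hmono : MonotoneOn u (Icc σ t1) := by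
    apply monotoneOn_of_deriv_nonneg (convex_Icc _ _)
    · exact fun s hs => ((hd s (by linarith [hs.1])).continuousAt).continuousWithinAt
    · intro s hs
      rw [interior_Icc] at hs
      exact ((hd s (by linarith [hs.1])).differentiableAt).differentiableWithinAt
    · intro s hs
      rw [interior_Icc] at hs
      rw [(hd s (by linarith [hs.1])).deriv]
      exact hg s (by linarith [hs.1]) (hlt s hs.1 (le_of_lt hs.2))
  have := hmono ⟨le_rfl, le_of_lt hσlt⟩ ⟨le_of_lt hσlt, le_rfl⟩ (le_of_lt hσlt)
  linarith

lemma const_of_hasDerivAt_zero {f : ℝ → ℝ} (hd : ∀ t, HasDerivAt f 0 t) (t : ℝ) : f t = f 0 := by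
  have : Differentiable ℝ f := fun t => (hd t).differentiableAt
  have h0 : ∀ t, deriv f t = 0 := fun t => (hd t).deriv
  exact is_const_of_deriv_eq_zero this h0 t 0


theorem global_sol_of_lipschitz {L : ℕ} {F : (Fin L → ℝ) → (Fin L → ℝ)} (K : ℝ≥0)
    (hK : LipschitzWith K F) (C : ℝ) (hC0 : 0 ≤ C) (hC : ∀ x, ‖F x‖ ≤ C) (a0 : Fin L → ℝ) :
    ∃ a : ℝ → Fin L → ℝ, a 0 = a0 ∧ ∀ t, HasDerivAt a (F (a t)) t := by
  have sol : ∀ n : ℕ, ∃ α : ℝ → Fin L → ℝ, α 0 = a0 ∧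
      ∀ t : ℝ, |t| < (n:ℝ)+1 → HasDerivAt α (F (α t)) t := by
    intro n
    have hn : (0:ℝ) ≤ (n:ℝ) := n.cast_nonneg
    have hpl : IsPicardLindelof (fun _ x => F x) (tmin := -((n:ℝ)+1)) (tmax := (n:ℝ)+1)
        ⟨0, by simp only [Set.mem_Icc]; constructor <;> linarith⟩ a0
        (C.toNNReal * ((n:ℝ≥0)+1)) 0 C.toNNReal K :=
      IsPicardLindelof.of_time_independent
        (fun x _ => by rw [Real.coe_toNNReal _ hC0]; exact hC x) hK.lipschitzOnWith
        (by push_cast; rw [sub_zero, zero_sub, neg_neg, max_self, sub_zero])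
    obtain ⟨α, hα0, hα⟩ := hpl.exists_eq_forall_mem_Icc_hasDerivWithinAt₀
    refine ⟨α, hα0, fun t ht => ?_⟩
    obtain ⟨h1, h2⟩ := abs_lt.mp ht
    exact (hα t (Set.Ioo_subset_Icc_self ⟨h1, h2⟩)).hasDerivAt (Icc_mem_nhds h1 h2)
  choose α hα0 hα using sol
  have agree : ∀ n m : ℕ, ∀ t : ℝ, |t| < (n:ℝ)+1 → |t| < (m:ℝ)+1 → α n t = α m t := by
    intro n m t htn htm
    have hn : (0:ℝ) ≤ (n:ℝ) := n.cast_nonneg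
    have hm : (0:ℝ) ≤ (m:ℝ) := m.cast_nonneg
    set r : ℝ := min ((n:ℝ)+1) ((m:ℝ)+1) with hr
    have hrpos : (0:ℝ) < r := by simp only [hr, lt_min_iff]; constructor <;> linarith
    have key : Set.EqOn (α n) (α m) (Set.Ioo (-r) r) := by
      refine ODE_solution_unique_of_mem_Ioo (v := fun _ x => F x)
        (s := fun _ => Set.univ) (fun t _ x _ y _ => hK.edist_le_mul x y)
        (t₀ := 0) ⟨by linarith, hrpos⟩ ?_ ?_ ?_
      · intro s hs
        have habs : |s| < r := abs_lt.mpr ⟨by simpa using hs.1, hs.2⟩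
        exact ⟨hα n s (habs.trans_le (min_le_left _ _)), Set.mem_univ _⟩
      · intro s hs
        have habs : |s| < r := abs_lt.mpr ⟨by simpa using hs.1, hs.2⟩
        exact ⟨hα m s (habs.trans_le (min_le_right _ _)), Set.mem_univ _⟩
      · rw [hα0 n, hα0 m]
    have habs : |t| < r := lt_min htn htm
    exact key ⟨by simpa using (abs_lt.mp habs).1, (abs_lt.mp habs).2⟩
  refine ⟨fun t => α ⌊|t|⌋₊ t, ?_, ?_⟩
  · simpa using hα0 0
  · intro t
    set N := ⌊|t|⌋₊ with hN
    have htN : |t| < (N:ℝ)+1 := Nat.lt_floor_add_one _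
    have hev : (fun s => α ⌊|s|⌋₊ s) =ᶠ[nhds t] α N := by
      have hopen : IsOpen {s : ℝ | |s| < (N:ℝ)+1} :=
        isOpen_lt (continuous_abs) continuous_const
      filter_upwards [hopen.mem_nhds htN] with s hs
      exact agree ⌊|s|⌋₊ N s (Nat.lt_floor_add_one _) hs
    exact ((hα N t htN).congr_of_eventuallyEq hev)

/-- Existence, uniqueness and nonnegativity of the global solution on `[0,∞)`. -/
theorem auxin_existence_uniqueness {L : ℕ} (hL : 1 ≤ L) (G : SimpleGraph (Fin L))
    [DecidableRel G.Adj] (κ D T : ℝ) (hκ : 0 < κ) (hD : 0 ≤ D) (hT : 0 < T)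
    (a0 : Fin L → ℝ) (ha0 : ∀ i, 0 ≤ a0 i) :
    ∃ a : ℝ → Fin L → ℝ,
      a 0 = a0 ∧
      (∀ t, 0 ≤ t → HasDerivAt a (auxF G κ D T (a t)) t) ∧
      (∀ t, 0 ≤ t → ∀ i, 0 ≤ a t i) ∧
      (∀ b : ℝ → Fin L → ℝ, b 0 = a0 →
        (∀ t, 0 ≤ t → HasDerivAt b (auxF G κ D T (b t)) t) →
        ∀ t, 0 ≤ t → b t = a t) := by
  classical
  set S : ℝ := ∑ i, a0 i with hSdef
  have hS : 0 ≤ S := Finset.sum_nonneg fun i _ => ha0 i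
  have ha0le : ∀ i, a0 i ≤ S := fun i =>
    Finset.single_le_sum (fun j _ => ha0 j) (Finset.mem_univ i)
  set FM : (Fin L → ℝ) → (Fin L → ℝ) := fun x => auxF G κ D T (auxClamp S x) with hFM
  -- FM is globally Lipschitz and bounded
  obtain ⟨K, hK⟩ := auxF_lipschitzOnWith G D T hκ hS
  have hKF : LipschitzWith K FM := by
    apply LipschitzWith.of_dist_le_mul
    intro x y
    have hmx : auxClamp S x ∈ auxBox S := mem_auxBox.mpr (auxClamp_mem hS x)
    have hmy : auxClamp S y ∈ auxBox S := mem_auxBox.mpr (auxClamp_mem hS y)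
    calc dist (FM x) (FM y) ≤ K * dist (auxClamp S x) (auxClamp S y) :=
          hK.dist_le_mul _ hmx _ hmy
      _ ≤ K * dist x y := by
          have h1 := (auxClamp_lipschitz (L := L) S).dist_le_mul x y
          rw [NNReal.coe_one, one_mul] at h1
          exact mul_le_mul_of_nonneg_left h1 K.coe_nonneg
  obtain ⟨C, hC0, hCb⟩ := auxF_bddOn G D T hκ hS
  have hCF : ∀ x, ‖FM x‖ ≤ C := fun x => hCb _ (mem_auxBox.mpr (auxClamp_mem hS x))
  obtain ⟨a, ha0', had⟩ := global_sol_of_lipschitz K hKF C hC0 hCF a0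
  -- sum conservation
  have hsum : ∀ t, ∑ i, a t i = S := by
    have hσ : ∀ t, HasDerivAt (fun s => ∑ i, a s i) 0 t := by
      intro t
      have h1 : HasDerivAt (fun s => ∑ i, a s i) (∑ i, FM (a t) i) t :=
        HasDerivAt.fun_sum fun i _ => hasDerivAt_component (had t) i
      simp only [hFM] at h1
      rwa [sum_auxF_eq_zero] at h1
    intro t
    rw [const_of_hasDerivAt_zero hσ t, ha0']
  -- componentwise nonnegativity
  have hnonneg : ∀ t, 0 ≤ t → ∀ i, 0 ≤ a t i := by
    intro t ht i
    refine nonneg_of_deriv_nonneg_of_neg (u := fun s => a s i) (g := fun s => FM (a s) i)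
      (fun s hs => hasDerivAt_component (had s) i) (by simpa [ha0'] using ha0 i) ?_ t ht
    intro s hs hneg
    set c : Fin L → ℝ := auxClamp S (a s) with hc
    have hci : c i = 0 := auxClamp_eq_zero (le_of_lt hneg)
    show (0:ℝ) ≤ auxF G κ D T c i
    unfold auxF
    rw [hci]
    simp only [mul_zero, zero_mul, zero_div, sub_zero, zero_sub, neg_zero,
      Finset.sum_const_zero, add_zero]
    exact mul_nonneg hD (Finset.sum_nonneg fun k _ => (auxClamp_mem hS (a s) k).1)
  have hbox : ∀ t, 0 ≤ t → a t ∈ auxBox S := by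
    intro t ht
    refine mem_auxBox.mpr fun i => ⟨hnonneg t ht i, ?_⟩
    have := Finset.single_le_sum (fun j _ => hnonneg t ht j) (Finset.mem_univ i)
    rw [hsum t] at this
    exact this
  have hadaux : ∀ t, 0 ≤ t → HasDerivAt a (auxF G κ D T (a t)) t := by
    intro t ht
    have h2 := had t
    simp only [hFM] at h2
    rwa [auxClamp_eq_self (mem_auxBox.mp (hbox t ht))] at h2
  refine ⟨a, ha0', hadaux, hnonneg, ?_⟩
  -- uniqueness
  intro b hb0 hbd t1 ht1
  have hU := isOpen_auxU G κ
  have hcd := contDiffOn_auxF G κ D T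
  have hsubU := auxBox_subset_auxU G hκ S
  set Z : Set ℝ := {τ | τ ∈ Icc (0:ℝ) t1 ∧ ∀ s ∈ Icc (0:ℝ) τ, b s = a s} with hZdef
  have hZ0 : (0:ℝ) ∈ Z := by
    refine ⟨⟨le_rfl, ht1⟩, fun s hs => ?_⟩
    have : s = 0 := le_antisymm hs.2 hs.1
    rw [this, hb0, ha0']
  have hZbdd : BddAbove Z := ⟨t1, fun z hz => hz.1.2⟩
  set τ := sSup Z with hτdef
  have hτ0 : 0 ≤ τ := le_csSup hZbdd hZ0
  have hτt1 : τ ≤ t1 := csSup_le ⟨0, hZ0⟩ fun z hz => hz.1.2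
  have hbefore : ∀ s, 0 ≤ s → s < τ → b s = a s := by
    intro s hs hsτ
    obtain ⟨z, hzZ, hsz⟩ := exists_lt_of_lt_csSup ⟨0, hZ0⟩ hsτ
    exact hzZ.2 s ⟨hs, le_of_lt hsz⟩
  have hbτ : b τ = a τ := by
    rcases eq_or_lt_of_le hτ0 with h | h
    · rw [← h, hb0, ha0']
    · have hca : ContinuousAt a τ := (had τ).continuousAt
      have hcb : ContinuousAt b τ := (hbd τ hτ0).continuousAt
      have hev : b =ᶠ[nhdsWithin τ (Set.Iio τ)] a := by
        filter_upwards [Ioo_mem_nhdsLT h] with s hs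
        exact hbefore s (le_of_lt hs.1) hs.2
      have h1 : Filter.Tendsto b (nhdsWithin τ (Set.Iio τ)) (nhds (b τ)) :=
        hcb.continuousWithinAt.tendsto
      have h2 : Filter.Tendsto a (nhdsWithin τ (Set.Iio τ)) (nhds (a τ)) :=
        hca.continuousWithinAt.tendsto
      exact tendsto_nhds_unique (h1.congr' hev) h2
  have hτeq : τ = t1 := by
    by_contra hne'
    have hτlt : τ < t1 := lt_of_le_of_ne hτt1 hne'
    have haU : a τ ∈ auxU G κ := hsubU (hbox τ hτ0)
    have hcda : ContDiffAt ℝ 1 (auxF G κ D T) (a τ) := hcd.contDiffAt (hU.mem_nhds haU)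
    obtain ⟨K', tset, htset, hlip⟩ := hcda.exists_lipschitzOnWith
    obtain ⟨ε, hε, hball⟩ := Metric.mem_nhds_iff.mp htset
    have hca : ContinuousAt a τ := (had τ).continuousAt
    have hcb : ContinuousAt b τ := (hbd τ hτ0).continuousAt
    have hev : ∀ᶠ s in nhds τ, a s ∈ Metric.ball (a τ) ε ∧ b s ∈ Metric.ball (a τ) ε := by
      have h1 := hca.eventually_mem (Metric.ball_mem_nhds _ hε)
      have h2 := hcb.eventually_mem (by rw [hbτ]; exact Metric.ball_mem_nhds _ hε)
      exact h1.and h2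
    obtain ⟨δ, hδ, hδprop⟩ := Metric.eventually_nhds_iff.mp hev
    set δ' : ℝ := min (δ/2) (t1 - τ) with hδ'def
    have hδ'pos : 0 < δ' := lt_min (by linarith) (by linarith)
    have hδ'δ : δ' < δ := lt_of_le_of_lt (min_le_left _ _) (by linarith)
    have hmem : ∀ s ∈ Icc τ (τ + δ'), a s ∈ tset ∧ b s ∈ tset := by
      intro s hs
      have hd1 : dist s τ < δ := by
        rw [Real.dist_eq, abs_of_nonneg (sub_nonneg.mpr hs.1)]
        linarith [hs.2]
      obtain ⟨hA, hB⟩ := hδprop hd1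
      exact ⟨hball hA, hball hB⟩
    have hkey : Set.EqOn b a (Icc τ (τ + δ')) := by
      refine ODE_solution_unique_of_mem_Icc_right (v := fun _ x => auxF G κ D T x)
        (s := fun _ => tset) (fun _ _ => hlip) ?_ ?_ ?_ ?_ ?_ ?_ hbτ
      · exact fun s hs => ((hbd s (le_trans hτ0 hs.1)).continuousAt).continuousWithinAt
      · exact fun s hs => (hbd s (le_trans hτ0 hs.1)).hasDerivWithinAt
      · exact fun s hs => (hmem s (Set.Ico_subset_Icc_self hs)).2
      · exact fun s hs => ((hadaux s (le_trans hτ0 hs.1)).continuousAt).continuousWithinAt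
      · exact fun s hs => (hadaux s (le_trans hτ0 hs.1)).hasDerivWithinAt
      · exact fun s hs => (hmem s (Set.Ico_subset_Icc_self hs)).1
    have hZmem : τ + δ' ∈ Z := by
      refine ⟨⟨by linarith, by have := min_le_right (δ/2) (t1 - τ); linarith⟩, ?_⟩
      intro s hs
      rcases lt_or_ge s τ with h | h
      · exact hbefore s hs.1 h
      · exact hkey ⟨h, hs.2⟩
    have := le_csSup hZbdd hZmem
    linarith
  rw [hτeq] at hbτ
  exact hbτ
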